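/- In the Zorn algebra 𝒵, if a, b ∈ 𝒵 \ {0} satisfy b·a = 0, then a·(x·b̄) ∈ ℝ·b̄ for every x ∈ 𝒵; more precisely a·(x·b̄) = 2 Re(a·x)·b̄ where Re(z) = ⟨z, 1⟩. -/

import Mathlib

open Matrix

/-- The Zorn vector-matrix algebra `𝒵 = ℝ × ℝ³ × ℝ³ × ℝ`, elements `(a, x, y, b)`. -/
abbrev Zorn : Type := ℝ × (Fin 3 → ℝ) × (Fin 3 → ℝ) × ℝ

/-- The Zorn product. -/
def zmul (Z W : Zorn) : Zorn :=
  (Z.1 * W.1 + Z.2.1 ⬝ᵥ W.2.2.1,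
   Z.1 • W.2.1 + W.2.2.2 • Z.2.1 - Z.2.2.1 ⨯₃ W.2.2.1,
   W.1 • Z.2.2.1 + Z.2.2.2 • W.2.2.1 + Z.2.1 ⨯₃ W.2.1,
   W.2.1 ⬝ᵥ Z.2.2.1 + Z.2.2.2 * W.2.2.2)

/-- The norm `N(a, x, y, b) = ab − x·y`. -/
def zN (Z : Zorn) : ℝ := Z.1 * Z.2.2.2 - Z.2.1 ⬝ᵥ Z.2.2.1

/-- Conjugation `(a, x, y, b) ↦ (b, −x, −y, a)`. -/
def zconj (Z : Zorn) : Zorn := (Z.2.2.2, -Z.2.1, -Z.2.2.1, Z.1)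

/-- The unit `1 = (1, 0, 0, 1)`. -/
def zone : Zorn := (1, 0, 0, 1)

/-- The symmetric bilinear form obtained by polarizing the norm. -/
noncomputable def zinner (Z W : Zorn) : ℝ := (zN (Z + W) - zN Z - zN W) / 2

/-- The real part `Re(z) = ⟨z, 1⟩`. -/
noncomputable def zRe (Z : Zorn) : ℝ := zinner Z zone

private lemma fin3_ext (f g : Fin 3 → ℝ) (h0 : f 0 = g 0) (h1 : f 1 = g 1)
    (h2 : f 2 = g 2) : f = g := by
  funext i; fin_cases i <;> assumption

/-- if `a, b ≠ 0` and `b·a = 0` in the Zorn algebra, then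
`a·(x·b̄) = 2 Re(a·x)·b̄ ∈ ℝ·b̄` for every `x`. -/
theorem darboux_stmt14 (a b : Zorn) (ha : a ≠ 0) (hb : b ≠ 0)
    (hba : zmul b a = 0) :
    ∀ x : Zorn, zmul a (zmul x (zconj b)) = (2 * zRe (zmul a x)) • zconj b ∧
      ∃ c : ℝ, zmul a (zmul x (zconj b)) = c • zconj b := by
  intro x
  have key : zmul a (zmul x (zconj b)) = (2 * zRe (zmul a x)) • zconj b := by
    obtain ⟨a1, au, av, a4⟩ := a
    obtain ⟨b1, bu, bv, b4⟩ := b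
    obtain ⟨x1, xu, xv, x4⟩ := x
    rw [Prod.ext_iff, Prod.ext_iff, Prod.ext_iff] at hba
    obtain ⟨h1, hu, hv, h4⟩ := hba
    simp only [zmul, zconj, zRe, zinner, zN, zone, cross_apply, dotProduct,
      Fin.sum_univ_three, Prod.fst_add, Prod.snd_add, Pi.add_apply,
      Prod.fst_zero, Prod.snd_zero, Pi.zero_apply] at h1 hu hv h4 ⊢
    have hu0 := congrFun hu 0
    have hu1 := congrFun hu 1
    have hu2 := congrFun hu 2
    have hv0 := congrFun hv 0
    have hv1 := congrFun hv 1
    have hv2 := congrFun hv 2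
    simp only [Pi.add_apply, Pi.sub_apply, Pi.smul_apply, smul_eq_mul,
      Pi.zero_apply, Matrix.cons_val_zero, Matrix.cons_val_one, Matrix.head_cons,
      Matrix.cons_val_two, Matrix.tail_cons] at hu0 hu1 hu2 hv0 hv1 hv2
    refine Prod.ext ?_ (Prod.ext ?_ (Prod.ext ?_ ?_))
    all_goals simp only [Prod.smul_mk, Prod.fst, Prod.snd, smul_eq_mul, Pi.add_apply,
        Pi.sub_apply, Pi.smul_apply, Pi.neg_apply, Matrix.cons_val_zero, Matrix.cons_val_one,
        Matrix.head_cons, Matrix.cons_val_two, Matrix.tail_cons]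
    · linear_combination (-1) * xu 0 * hv0 + (-1) * xu 1 * hv1 + (-1) * xu 2 * hv2 + (-1) * x4 * h4
    · refine fin3_ext _ _ ?_ ?_ ?_ <;>
        simp only [Pi.add_apply, Pi.sub_apply, Pi.smul_apply, smul_eq_mul, Pi.neg_apply,
          Matrix.cons_val_zero, Matrix.cons_val_one, Matrix.head_cons,
          Matrix.cons_val_two, Matrix.tail_cons]
      · linear_combination xu 0 * h1 + x4 * hu0 + (-1) * xv 2 * hv1 + xv 1 * hv2
      · linear_combination xu 1 * h1 + x4 * hu1 + xv 2 * hv0 + (-1) * xv 0 * hv2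
      · linear_combination xu 2 * h1 + x4 * hu2 + (-1) * xv 1 * hv0 + xv 0 * hv1
    · refine fin3_ext _ _ ?_ ?_ ?_ <;>
        simp only [Pi.add_apply, Pi.sub_apply, Pi.smul_apply, smul_eq_mul, Pi.neg_apply,
          Matrix.cons_val_zero, Matrix.cons_val_one, Matrix.head_cons,
          Matrix.cons_val_two, Matrix.tail_cons]
      · linear_combination xu 2 * hu1 + (-1) * xu 1 * hu2 + x1 * hv0 + xv 0 * h4
      · linear_combination (-1) * xu 2 * hu0 + xu 0 * hu2 + x1 * hv1 + xv 1 * h4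
      · linear_combination xu 1 * hu0 + (-1) * xu 0 * hu1 + x1 * hv2 + xv 2 * h4
    · linear_combination (-1) * x1 * h1 + (-1) * xv 0 * hu0 + (-1) * xv 1 * hu1 + (-1) * xv 2 * hu2
  exact ⟨key, ⟨2 * zRe (zmul a x), key⟩⟩
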